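/- Let Γ be a finite graph with vertex set V, A(Γ) the right-angled Artin group on Γ, and u, v ∈ V distinct vertices. Then the conjugates u^x and v^y (for x, y ∈ A(Γ)) commute if and only if [u,v] = 1 and x y^{-1} ∈ Z(u) Z(v), where Z(w) denotes the centralizer of w in A(Γ). -/

import Mathlib

set_option maxHeartbeats 1000000


open scoped commutatorElement

/-- The set of commutator relations of a right-angled Artin group on a graph. -/
def raagRels {α : Type*} (Γ : SimpleGraph α) : Set (FreeGroup α) :=
  {r | ∃ u v : α, Γ.Adj u v ∧ r = ⁅FreeGroup.of u, FreeGroup.of v⁆}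

/-- The right-angled Artin group on the graph `Γ`. -/
def Raag {α : Type*} (Γ : SimpleGraph α) : Type _ := PresentedGroup (raagRels Γ)

instance {α : Type*} (Γ : SimpleGraph α) : Group (Raag Γ) :=
  inferInstanceAs (Group (PresentedGroup (raagRels Γ)))

/-- The standard generator of `Raag Γ` corresponding to a vertex. -/
def Raag.of {α : Type*} (Γ : SimpleGraph α) (v : α) : Raag Γ := PresentedGroup.of v

/-- The commutation graph of a subset `X` of a group `G`. -/
def commGraph (G : Type*) [Group G] (X : Set G) : SimpleGraph X where
  Adj x y := x ≠ y ∧ Commute x.1 y.1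
  symm := ⟨fun _ _ ⟨h1, h2⟩ => ⟨h1.symm, h2.symm⟩⟩
  loopless := ⟨fun _ ⟨h1, _⟩ => h1 rfl⟩

/-- The natural homomorphism `A(CG(X)) → G` extending the identity on `X`. -/
def natHom (G : Type*) [Group G] (X : Set G) : Raag (commGraph G X) →* G :=
  PresentedGroup.toGroup (f := Subtype.val) (by
    rintro r ⟨u, v, hadj, rfl⟩
    rw [map_commutatorElement]
    simp only [FreeGroup.lift_apply_of]
    exact commutatorElement_eq_one_iff_commute.mpr hadj.2)

/-- The star of a vertex: vertices equal or adjacent to `v`. -/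
def starSet {α : Type*} (Γ : SimpleGraph α) (v : α) : Set α := {w | w = v ∨ Γ.Adj v w}

/-- The link of a vertex: vertices adjacent to `v`. -/
def linkSet {α : Type*} (Γ : SimpleGraph α) (v : α) : Set α := {w | Γ.Adj v w}

/-- The double of a graph `X` along the star of a vertex `v`:
two copies of the complement of the star, glued along the star. -/
def doubleStar {α : Type*} (X : SimpleGraph α) (v : α) :
    SimpleGraph ((Fin 2 × {w : α // w ∉ starSet X v}) ⊕ {w : α // w ∈ starSet X v}) where
  Adj a b :=
    match a, b with
    | .inl (i, x), .inl (j, y) => i = j ∧ X.Adj x.1 y.1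
    | .inl (_, x), .inr y => X.Adj x.1 y.1
    | .inr x, .inl (_, y) => X.Adj x.1 y.1
    | .inr x, .inr y => X.Adj x.1 y.1
  symm := ⟨by
    rintro (⟨i, x⟩ | x) (⟨j, y⟩ | y) h
    · exact ⟨h.1.symm, h.2.symm⟩
    · exact h.symm
    · exact h.symm
    · exact h.symm⟩
  loopless := ⟨by
    rintro (⟨i, x⟩ | x) h
    · exact X.loopless.irrefl _ h.2
    · exact X.loopless.irrefl _ h⟩

/-- The group element represented by a word (a list of letters with signs). -/
def wprod {α : Type*} (Γ : SimpleGraph α) (l : List (α × Bool)) : Raag Γ :=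
  (l.map fun p => if p.2 then Raag.of Γ p.1 else (Raag.of Γ p.1)⁻¹).prod

/-- The word length of an element of `Raag Γ` with respect to the vertex generators. -/
noncomputable def wordLength {α : Type*} (Γ : SimpleGraph α) (w : Raag Γ) : ℕ :=
  sInf {n | ∃ l : List (α × Bool), l.length = n ∧ wprod Γ l = w}

/-- A word is reduced if its length realizes the word length of the element it represents. -/
def WordReduced {α : Type*} (Γ : SimpleGraph α) (l : List (α × Bool)) : Prop :=
  l.length = wordLength Γ (wprod Γ l)

/-- The right-counting vector of a word: `rcv Γ l i` is the minimal word length of `y`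
such that the suffix of `l` from position `i` equals `x * sᵢ^{eᵢ} * y` with `x` in the
subgroup generated by the link of `sᵢ`. -/
noncomputable def rcv {α : Type*} (Γ : SimpleGraph α) (l : List (α × Bool))
    (i : Fin l.length) : ℕ :=
  sInf {m | ∃ x y : Raag Γ,
    x ∈ Subgroup.closure (Raag.of Γ '' linkSet Γ (l.get i).1) ∧
    wordLength Γ y = m ∧
    wprod Γ (l.drop i) = x * wprod Γ [l.get i] * y}

/-- The exponent used by the inflating map `σ` at position `i` of the word `l`. -/
noncomputable def sigmaExp {α : Type*} (Γ : SimpleGraph α) (M : ℕ) (l : List (α × Bool))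
    (i : Fin l.length) : ℤ :=
  if (l.get i).2 then (4 : ℤ) ^ (M - 1 - rcv Γ l i)
  else -2 * (4 : ℤ) ^ (M - 1 - rcv Γ l i)

/-- The inflating map `σ` applied to a word `l`, as an element of `Raag Γ`. -/
noncomputable def sigmaProd {α : Type*} (Γ : SimpleGraph α) (M : ℕ)
    (l : List (α × Bool)) : Raag Γ :=
  (List.ofFn fun i : Fin l.length => (Raag.of Γ (l.get i).1) ^ (sigmaExp Γ M l i)).prod

/-! ### Basic API for `Raag` -/

namespace RaagAux
open Subgroup

universe u
variable {V : Type u} {K : Type*} [Group K] (Γ : SimpleGraph V)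

/-- Universal property of `Raag`. -/
def rlift (f : V → K) (hf : ∀ ⦃a b⦄, Γ.Adj a b → Commute (f a) (f b)) : Raag Γ →* K :=
  PresentedGroup.toGroup (f := f) (by
    rintro r ⟨a, b, hab, rfl⟩
    rw [map_commutatorElement]
    simp only [FreeGroup.lift_apply_of]
    exact commutatorElement_eq_one_iff_commute.mpr (hf hab))

@[simp] theorem rlift_of (f : V → K) (hf) (v : V) :
    rlift Γ f hf (Raag.of Γ v) = f v := PresentedGroup.toGroup.of _

theorem hom_ext {f g : Raag Γ →* K} (h : ∀ v, f (Raag.of Γ v) = g (Raag.of Γ v)) : f = g :=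
  PresentedGroup.ext h

theorem closure_range_of : closure (Set.range (Raag.of Γ)) = ⊤ :=
  PresentedGroup.closure_range_of _

theorem adj_commute {a b : V} (h : Γ.Adj a b) : Commute (Raag.of Γ a) (Raag.of Γ b) := by
  rw [← commutatorElement_eq_one_iff_commute]
  have h1 : (PresentedGroup.mk (raagRels Γ)) ⁅FreeGroup.of a, FreeGroup.of b⁆ = 1 := by
    apply (QuotientGroup.eq_one_iff _).2
    exact Subgroup.subset_normalClosure ⟨a, b, h, rfl⟩
  rw [map_commutatorElement] at h1
  exact h1

/-- The range of a hom out of `Raag` is the closure of the image of the generators. -/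
theorem range_eq (f : Raag Γ →* K) :
    f.range = closure (Set.range (f ∘ Raag.of Γ)) := by
  rw [MonoidHom.range_eq_map, ← closure_range_of Γ, MonoidHom.map_closure, Set.range_comp]

end RaagAux

namespace RaagAux
open Subgroup

universe u
variable {V : Type u} {K : Type*} [Group K] (Γ : SimpleGraph V)

/-- Inclusion of the RAAG of an induced subgraph. -/
def incl (S : Set V) : Raag (Γ.induce S) →* Raag Γ :=
  rlift _ (fun s => Raag.of Γ s.1) (fun a b h => adj_commute Γ (by simpa using h))

@[simp] theorem incl_of (S : Set V) (s : S) :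
    incl Γ S (Raag.of _ s) = Raag.of Γ s.1 := rlift_of ..

open Classical in
/-- Retraction onto the RAAG of an induced subgraph. -/
noncomputable def retr (S : Set V) : Raag Γ →* Raag (Γ.induce S) :=
  rlift _ (fun v => if h : v ∈ S then Raag.of _ (⟨v, h⟩ : S) else 1)
    (fun a b hab => by
      by_cases ha : a ∈ S <;> by_cases hb : b ∈ S <;>
        simp only [dif_pos, dif_neg, ha, hb, Commute.one_left, Commute.one_right, dite_true,
          dite_false]
      · exact adj_commute _ (by simpa using hab)
      all_goals first | exact Commute.one_right _ | exact Commute.one_left _)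

@[simp] theorem retr_of_mem (S : Set V) (v : V) (h : v ∈ S) :
    retr Γ S (Raag.of Γ v) = Raag.of (Γ.induce S) ⟨v, h⟩ := by
  simp only [retr, rlift_of]
  exact dif_pos h

theorem retr_incl (S : Set V) (g : Raag (Γ.induce S)) : retr Γ S (incl Γ S g) = g := by
  have : (retr Γ S).comp (incl Γ S) = MonoidHom.id _ := by
    apply hom_ext
    intro s
    simp
  simpa using DFunLike.congr_fun this g

theorem incl_injective (S : Set V) : Function.Injective (incl Γ S) := by
  intro a b h
  have := congrArg (retr Γ S) h
  simpa [retr_incl] using this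

theorem range_incl (S : Set V) :
    (incl Γ S).range = closure (Raag.of Γ '' S) := by
  rw [range_eq]
  congr 1
  ext g
  constructor
  · rintro ⟨s, rfl⟩; exact ⟨s.1, s.2, by simp⟩
  · rintro ⟨a, ha, rfl⟩; exact ⟨⟨a, ha⟩, by simp⟩

/-- Map between RAAGs of nested induced subgraphs. -/
def mapSub {S T : Set V} (h : S ⊆ T) : Raag (Γ.induce S) →* Raag (Γ.induce T) :=
  rlift _ (fun s => Raag.of _ (⟨s.1, h s.2⟩ : T)) (fun a b hab => adj_commute _ (by simpa using hab))

@[simp] theorem mapSub_of {S T : Set V} (h : S ⊆ T) (s : S) :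
    mapSub Γ h (Raag.of _ s) = Raag.of (Γ.induce T) ⟨s.1, h s.2⟩ := rlift_of ..

theorem incl_mapSub {S T : Set V} (h : S ⊆ T) (g : Raag (Γ.induce S)) :
    incl Γ T (mapSub Γ h g) = incl Γ S g := by
  have : (incl Γ T).comp (mapSub Γ h) = incl Γ S := by
    apply hom_ext; intro s; simp
  simpa using DFunLike.congr_fun this g

theorem mapSub_injective {S T : Set V} (h : S ⊆ T) : Function.Injective (mapSub Γ h) := by
  intro a b hab
  apply incl_injective Γ S
  rw [← incl_mapSub Γ h, ← incl_mapSub Γ h, hab]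

theorem range_mapSub {S T : Set V} (h : S ⊆ T) :
    (mapSub Γ h).range = closure (Raag.of (Γ.induce T) '' {t : T | t.1 ∈ S}) := by
  rw [range_eq]
  congr 1
  ext g
  constructor
  · rintro ⟨s, rfl⟩; exact ⟨⟨s.1, h s.2⟩, s.2, by simp⟩
  · rintro ⟨a, ha, rfl⟩; exact ⟨⟨a.1, ha⟩, by simp⟩

open Classical in
/-- The exponent-sum homomorphism at a vertex. -/
noncomputable def expHom (v : V) : Raag Γ →* Multiplicative ℤ :=
  rlift _ (fun w => Multiplicative.ofAdd (if w = v then 1 else 0)) (fun _ _ _ => Commute.all _ _)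

theorem expHom_eq_one (v : V) {S : Set V} (hv : v ∉ S) {g : Raag Γ}
    (hg : g ∈ closure (Raag.of Γ '' S)) : expHom Γ v g = 1 := by
  have : closure (Raag.of Γ '' S) ≤ (expHom Γ v).ker := by
    rw [closure_le]
    rintro _ ⟨a, ha, rfl⟩
    have : a ≠ v := fun h => hv (h ▸ ha)
    simp [expHom, MonoidHom.mem_ker, this]
  simpa [MonoidHom.mem_ker] using this hg

theorem expHom_conj (v : V) (g : Raag Γ) :
    expHom Γ v (g * Raag.of Γ v * g⁻¹) = Multiplicative.ofAdd 1 := by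
  have h1 : expHom Γ v (Raag.of Γ v) = Multiplicative.ofAdd 1 := by simp [expHom]
  have : expHom Γ v (g * Raag.of Γ v * g⁻¹)
      = expHom Γ v g * expHom Γ v (Raag.of Γ v) * (expHom Γ v g)⁻¹ := by
    simp [map_mul, map_inv]
  rw [this, h1, mul_comm]
  group

/-- A conjugate of a generator lies in a "parabolic" only if the vertex is in the set. -/
theorem mem_of_conj_mem {v : V} {S : Set V} {g : Raag Γ}
    (h : g * Raag.of Γ v * g⁻¹ ∈ closure (Raag.of Γ '' S)) : v ∈ S := by
  by_contra hv
  have h1 := expHom_eq_one Γ v hv h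
  rw [expHom_conj] at h1
  have : (1 : ℤ) = 0 := by
    have := congrArg Multiplicative.toAdd h1
    simpa using this
  norm_num at this

end RaagAux

/-! ### Generic amalgam (pushout) word lemmas -/

namespace RaagAux
section Amalgam
open Monoid Subgroup

variable {ι : Type*} {H : Type*} {G : ι → Type*} [Group H] [∀ i, Group (G i)]
  (φ : ∀ i, H →* G i)

/-- The product of a list of letters in the pushout. -/
def wP (l : List (Σ i, G i)) : PushoutI φ :=
  (l.map fun p => PushoutI.of (φ := φ) p.1 p.2).prod

/-- A list of letters is a valid reduced word. -/
def OkW (l : List (Σ i, G i)) : Prop :=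
  l.IsChain (fun a b => a.1 ≠ b.1) ∧ ∀ p ∈ l, p.2 ∉ (φ p.1).range

@[simp] theorem wP_nil : wP φ [] = 1 := rfl

@[simp] theorem wP_cons (p : (Σ i, G i)) (l : List (Σ i, G i)) :
    wP φ (p :: l) = PushoutI.of (φ := φ) p.1 p.2 * wP φ l := by simp [wP]

@[simp] theorem wP_append (l₁ l₂ : List (Σ i, G i)) :
    wP φ (l₁ ++ l₂) = wP φ l₁ * wP φ l₂ := by simp [wP]

theorem wP_singleton (p : (Σ i, G i)) : wP φ [p] = PushoutI.of (φ := φ) p.1 p.2 := by simp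

/-- Letterwise inverse of a word. -/
def invl (l : List (Σ i, G i)) : List (Σ i, G i) := l.reverse.map fun p => ⟨p.1, p.2⁻¹⟩

theorem invl_cons (p : (Σ i, G i)) (l : List (Σ i, G i)) :
    invl (p :: l) = invl l ++ [⟨p.1, p.2⁻¹⟩] := by simp [invl]

theorem wP_invl (l : List (Σ i, G i)) : wP φ (invl l) = (wP φ l)⁻¹ := by
  induction l with
  | nil => simp [invl]
  | cons p l ih => rw [invl_cons, wP_append, ih]; simp [mul_inv_rev]

theorem head?_invl (l : List (Σ i, G i)) :
    (invl l).head? = l.getLast?.map fun p => ⟨p.1, p.2⁻¹⟩ := by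
  rw [invl, List.head?_map, List.head?_reverse]

theorem okW_invl {l : List (Σ i, G i)} (hl : OkW φ l) : OkW φ (invl l) := by
  obtain ⟨hchain, hmem⟩ := hl
  constructor
  · rw [invl, List.isChain_map, List.isChain_reverse]
    exact hchain.imp (fun a b h => Ne.symm h)
  · intro p hp
    rw [invl, List.mem_map] at hp
    obtain ⟨q, hq, rfl⟩ := hp
    have := hmem q (List.mem_reverse.1 hq)
    simpa using this

theorem okW_conj {l : List (Σ i, G i)} (hl : OkW φ l) {j : ι} {c : G j}
    (hc : c ∉ (φ j).range) (hlast : ∀ q ∈ l.getLast?, Sigma.fst q ≠ j) :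
    OkW φ (l ++ ⟨j, c⟩ :: invl l) := by
  obtain ⟨hchain, hmem⟩ := hl
  have hinv := okW_invl φ ⟨hchain, hmem⟩
  constructor
  · rw [List.isChain_append]
    refine ⟨hchain, ?_, ?_⟩
    · rw [List.isChain_cons]
      refine ⟨?_, hinv.1⟩
      intro q hq
      rw [head?_invl, Option.mem_def, Option.map_eq_some_iff] at hq
      obtain ⟨p, hp, rfl⟩ := hq
      exact fun h => hlast p hp (by simpa using h.symm)
    · intro x hx y hy
      simp only [List.head?_cons, Option.mem_def, Option.some.injEq] at hy
      subst hy
      exact hlast x hx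
  · intro p hp
    rcases List.mem_append.1 hp with h | h
    · exact hmem p h
    · rcases List.mem_cons.1 h with rfl | h
      · exact hc
      · exact hinv.2 p h

theorem wP_conj (l : List (Σ i, G i)) {j : ι} (c : G j) :
    wP φ (l ++ ⟨j, c⟩ :: invl l)
      = wP φ l * PushoutI.of (φ := φ) j c * (wP φ l)⁻¹ := by
  rw [wP_append, wP_cons, wP_invl, mul_assoc]

end Amalgam
end RaagAux

namespace RaagAux
section Amalgam2
open Monoid Monoid.PushoutI Subgroup

variable {ι : Type*} {H : Type*} {G : ι → Type*} [Group H] [∀ i, Group (G i)]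
  {φ : ∀ i, H →* G i} (hφ : ∀ i, Function.Injective (φ i))

theorem ofCoprodI_word_prod (w : Monoid.CoprodI.Word G) :
    ofCoprodI w.prod = wP φ w.toList := by
  rw [Monoid.CoprodI.Word.prod, wP, map_list_prod, List.map_map]
  congr 1

theorem prod_toList (d : NormalWord.Transversal φ) (w : NormalWord d) :
    w.prod = base φ w.head * wP φ w.toList := by
  rw [NormalWord.prod, ofCoprodI_word_prod]

include hφ

theorem exists_rep (g : PushoutI φ) :
    ∃ (l : List (Σ i, G i)) (h : H), OkW φ l ∧ g = wP φ l * base φ h := by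
  classical
  obtain ⟨d⟩ := NormalWord.transversal_nonempty φ hφ
  obtain ⟨w, hgw⟩ : ∃ w : NormalWord d, w.prod = g :=
    ⟨NormalWord.equiv g, NormalWord.equiv.symm_apply_apply g⟩
  have hprod : g = base φ w.head * wP φ w.toList := by rw [← hgw, prod_toList]
  have hmem : ∀ p ∈ w.toList, Sigma.snd p ∉ (φ p.1).range := by
    intro p hp hr
    have hset : p.2 ∈ d.set p.1 := w.normalized p.1 p.2 hp
    have hne : p.2 ≠ 1 := w.ne_one p hp
    have h1 : (⟨⟨p.2, hr⟩, ⟨1, d.one_mem p.1⟩⟩ : ((φ p.1).range : Set (G p.1)) × d.set p.1)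
        = ⟨⟨1, one_mem _⟩, ⟨p.2, hset⟩⟩ := by
      apply (d.compl p.1).1
      simp
    have := congrArg (fun x => (x.1 : G p.1)) h1
    simp only at this
    exact hne (by simp_all)
  have hchain := w.chain_ne
  cases hl : w.toList with
  | nil =>
    refine ⟨[], w.head, ⟨List.isChain_nil, by simp⟩, ?_⟩
    rw [hprod, hl, wP_nil, one_mul, mul_one]
  | cons p rest =>
    refine ⟨⟨p.1, φ p.1 w.head * p.2⟩ :: rest, 1, ⟨?_, ?_⟩, ?_⟩
    · have := hchain
      rw [hl] at this
      rw [List.isChain_cons] at this ⊢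
      exact this
    · intro q hq
      rcases List.mem_cons.1 hq with rfl | hq
      · rintro ⟨y, hy⟩
        have : p.2 ∈ (φ p.1).range :=
          ⟨w.head⁻¹ * y, by rw [map_mul, map_inv, hy]; group⟩
        exact hmem p (hl ▸ List.mem_cons_self) this
      · exact hmem q (hl ▸ List.mem_cons_of_mem _ hq)
    · rw [hprod, hl, wP_cons, wP_cons, map_one, mul_one, map_mul,
        of_apply_eq_base φ p.1 w.head, ← mul_assoc]

/-- A reduced word of length at least 2 is not in the image of any vertex group. -/
theorem notin_range {l : List (Σ i, G i)} (hl : OkW φ l) (hlen : 2 ≤ l.length)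
    (j : ι) : wP φ l ∉ Set.range (PushoutI.of (φ := φ) j) := by
  classical
  rintro ⟨g, hg⟩
  obtain ⟨d⟩ := NormalWord.transversal_nonempty φ hφ
  set w : Monoid.CoprodI.Word G := ⟨l, fun p hp h1 => hl.2 p hp (h1 ▸ one_mem _), hl.1⟩ with hw
  have hred : Reduced φ w := fun p hp => hl.2 p hp
  have hwprod : ofCoprodI w.prod = wP φ l := ofCoprodI_word_prod w
  by_cases hgr : g ∈ (φ j).range
  · obtain ⟨h', rfl⟩ := hgr
    have hb : ofCoprodI w.prod ∈ (base φ).range := by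
      rw [hwprod, ← hg, of_apply_eq_base]
      exact ⟨h', rfl⟩
    have := hred.eq_empty_of_mem_range hφ hb
    have hnil : l = [] := congrArg Monoid.CoprodI.Word.toList this
    rw [hnil] at hlen; simp at hlen
  · obtain ⟨w', hw'prod, hw'map⟩ := hred.exists_normalWord_prod_eq d
    have hfst : w'.toList.map Sigma.fst = l.map Sigma.fst := hw'map
    have hfstIdx : (NormalWord.empty (d := d)).fstIdx ≠ some j := by
      simp [Monoid.CoprodI.Word.fstIdx, NormalWord.empty]
    set w₂ : NormalWord d := NormalWord.cons g NormalWord.empty hfstIdx hgr with hw₂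
    have hw₂prod : w₂.prod = PushoutI.of (φ := φ) j g := by
      rw [hw₂, NormalWord.prod_cons]
      simp
    have heq : w' = w₂ := by
      apply NormalWord.prod_injective
      rw [hw'prod, hw₂prod, hwprod, hg]
    have hlen2 : w₂.toList.length = 1 := by
      rw [hw₂]
      simp [NormalWord.cons, Monoid.CoprodI.Word.cons, NormalWord.empty,
        Monoid.CoprodI.Word.empty]
    have hll : l.length = 1 := by
      have h1 := congrArg List.length hfst
      rw [heq] at h1
      simpa [hlen2] using h1.symm
    omega

/-- Conjugates of a letter by a nonempty reduced word avoiding its index are not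
in the image of any vertex group. -/
theorem conj_notin_range {l : List (Σ i, G i)} (hl : OkW φ l) (hne : l ≠ [])
    {j : ι} {c : G j} (hc : c ∉ (φ j).range)
    (hlast : ∀ q ∈ l.getLast?, Sigma.fst q ≠ j) (i : ι) :
    wP φ l * PushoutI.of (φ := φ) j c * (wP φ l)⁻¹ ∉ Set.range (PushoutI.of (φ := φ) i) := by
  rw [← wP_conj]
  apply notin_range hφ (okW_conj φ hl hc hlast)
  have : 1 ≤ l.length := List.length_pos_iff.2 hne
  simp only [List.length_append, List.length_cons]
  omega

end Amalgam2
end RaagAux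

/-! ### Splitting a RAAG along the star of a vertex -/

namespace RaagAux
section Split
open Monoid Monoid.PushoutI Subgroup

universe u
variable {V : Type u} [DecidableEq V] (Γ : SimpleGraph V) (u : V)

/-- The two vertex sets of the splitting: the star of `u` and the complement of `u`. -/
def bS : Bool → Set V := fun b => cond b (starSet Γ u) {x | x ≠ u}

theorem link_subset_bS : ∀ b, linkSet Γ u ⊆ bS Γ u b := by
  intro b x hx
  cases b
  · exact fun h => Γ.loopless.irrefl u (h ▸ hx)
  · exact Or.inr hx

theorem u_mem_star : u ∈ bS Γ u true := Or.inl rfl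

/-- The amalgam maps. -/
def φS : ∀ b : Bool, Raag (Γ.induce (linkSet Γ u)) →* Raag (Γ.induce (bS Γ u b)) :=
  fun b => mapSub Γ (link_subset_bS Γ u b)

theorem φS_injective : ∀ b, Function.Injective (φS Γ u b) :=
  fun _ => mapSub_injective Γ _

theorem of_false_eq_of_true {b : V} (hbl : b ∈ linkSet Γ u) (h1 : b ∈ bS Γ u false)
    (h2 : b ∈ bS Γ u true) :
    PushoutI.of (φ := φS Γ u) false (Raag.of _ ⟨b, h1⟩)
      = PushoutI.of (φ := φS Γ u) true (Raag.of _ ⟨b, h2⟩) := by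
  have e1 : (φS Γ u false) (Raag.of _ (⟨b, hbl⟩ : linkSet Γ u)) = Raag.of _ ⟨b, h1⟩ :=
    mapSub_of ..
  have e2 : (φS Γ u true) (Raag.of _ (⟨b, hbl⟩ : linkSet Γ u)) = Raag.of _ ⟨b, h2⟩ :=
    mapSub_of ..
  rw [← e1, ← e2, of_apply_eq_base, of_apply_eq_base]

/-- The map from the RAAG to the pushout. -/
noncomputable def Fsp : Raag Γ →* PushoutI (φS Γ u) :=
  rlift _ (fun v => if h : v = u
      then PushoutI.of (φ := φS Γ u) true (Raag.of _ ⟨u, u_mem_star Γ u⟩)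
      else PushoutI.of (φ := φS Γ u) false (Raag.of _ ⟨v, h⟩))
    (by
      intro a b hab
      by_cases ha : a = u <;> by_cases hb : b = u
      · rw [ha, hb] at hab; exact absurd hab (Γ.loopless.irrefl u)
      · have hadj : Γ.Adj u b := ha ▸ hab
        rw [dif_pos ha, dif_neg hb, of_false_eq_of_true Γ u hadj hb (Or.inr hadj)]
        exact ((adj_commute _ (by simpa using hadj)).map _)
      · have hadj : Γ.Adj u a := hb ▸ hab.symm
        rw [dif_pos hb, dif_neg ha, of_false_eq_of_true Γ u hadj ha (Or.inr hadj)]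
        exact ((adj_commute _ (by simpa using hadj)).map _).symm
      · rw [dif_neg ha, dif_neg hb]
        exact ((adj_commute _ (by simpa using hab)).map _))

@[simp] theorem Fsp_of_u : Fsp Γ u (Raag.of Γ u)
    = PushoutI.of (φ := φS Γ u) true (Raag.of _ ⟨u, u_mem_star Γ u⟩) := by
  rw [Fsp, rlift_of, dif_pos rfl]

theorem Fsp_of_ne {v : V} (h : v ≠ u) : Fsp Γ u (Raag.of Γ v)
    = PushoutI.of (φ := φS Γ u) false (Raag.of _ ⟨v, h⟩) := by
  rw [Fsp, rlift_of, dif_neg h]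

/-- The map from the pushout to the RAAG. -/
noncomputable def Gsp : PushoutI (φS Γ u) →* Raag Γ :=
  PushoutI.lift (fun b => incl Γ (bS Γ u b)) (incl Γ (linkSet Γ u))
    (fun b => by
      apply hom_ext
      intro s
      simp [φS])

@[simp] theorem Gsp_of (b : Bool) (x : Raag (Γ.induce (bS Γ u b))) :
    Gsp Γ u (PushoutI.of (φ := φS Γ u) b x) = incl Γ (bS Γ u b) x :=
  PushoutI.lift_of ..

theorem Gsp_Fsp (g : Raag Γ) : Gsp Γ u (Fsp Γ u g) = g := by
  have : (Gsp Γ u).comp (Fsp Γ u) = MonoidHom.id _ := by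
    apply hom_ext
    intro v
    by_cases h : v = u
    · subst h
      simp
    · simp [Fsp_of_ne Γ u h]
  simpa using DFunLike.congr_fun this g

theorem Fsp_injective : Function.Injective (Fsp Γ u) := by
  intro a b h
  have := congrArg (Gsp Γ u) h
  simpa [Gsp_Fsp] using this

theorem Fsp_incl_false (x : Raag (Γ.induce (bS Γ u false))) :
    Fsp Γ u (incl Γ _ x) = PushoutI.of (φ := φS Γ u) false x := by
  have : (Fsp Γ u).comp (incl Γ (bS Γ u false))
      = (PushoutI.of (φ := φS Γ u) false : _ →* _) := by
    apply hom_ext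
    intro s
    rw [MonoidHom.comp_apply, incl_of, Fsp_of_ne Γ u s.2]
  exact DFunLike.congr_fun this x

theorem Fsp_incl_true (x : Raag (Γ.induce (bS Γ u true))) :
    Fsp Γ u (incl Γ _ x) = PushoutI.of (φ := φS Γ u) true x := by
  have : (Fsp Γ u).comp (incl Γ (bS Γ u true))
      = (PushoutI.of (φ := φS Γ u) true : _ →* _) := by
    apply hom_ext
    intro s
    rw [MonoidHom.comp_apply, incl_of]
    by_cases h : s.1 = u
    · have hs : s = ⟨u, u_mem_star Γ u⟩ := Subtype.ext h
      rw [hs]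
      simp
    · have hsl : s.1 ∈ linkSet Γ u := s.2.resolve_left h
      rw [Fsp_of_ne Γ u h, of_false_eq_of_true Γ u hsl h s.2]
  exact DFunLike.congr_fun this x

theorem mem_range_incl_of_Fsp {g : Raag Γ}
    (h : Fsp Γ u g ∈ Set.range (PushoutI.of (φ := φS Γ u) false)) :
    g ∈ (incl Γ (bS Γ u false)).range := by
  obtain ⟨x, hx⟩ := h
  exact ⟨x, by rw [← Gsp_Fsp Γ u g, ← hx, Gsp_of]⟩

/-- Every element of the star RAAG decomposes as a link element times a power of `u`. -/
theorem star_decomp (x : Raag (Γ.induce (bS Γ u true))) :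
    ∃ (h : Raag (Γ.induce (linkSet Γ u))) (k : ℤ),
      x = φS Γ u true h * (Raag.of _ ⟨u, u_mem_star Γ u⟩) ^ k := by
  set c : Raag (Γ.induce (bS Γ u true)) := Raag.of _ ⟨u, u_mem_star Γ u⟩ with hc
  have hcen : ∀ y, Commute c y := by
    intro y
    have : Subgroup.closure (Set.range (Raag.of (Γ.induce (bS Γ u true)))) ≤
        Subgroup.centralizer {c} := by
      rw [closure_le]
      rintro _ ⟨s, rfl⟩
      rw [SetLike.mem_coe, Subgroup.mem_centralizer_singleton_iff]
      by_cases h : s.1 = u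
      · have hs : s = ⟨u, u_mem_star Γ u⟩ := Subtype.ext h
        rw [hs]
      · have hadj : Γ.Adj u s.1 := s.2.resolve_left h
        have hcomm := adj_commute (Γ.induce (bS Γ u true))
          (show (Γ.induce (bS Γ u true)).Adj ⟨u, u_mem_star Γ u⟩ s by simpa using hadj)
        first | exact hcomm.eq | exact hcomm.symm.eq
    have hy : y ∈ Subgroup.centralizer {c} := by
      apply this
      rw [closure_range_of]
      trivial
    rw [Subgroup.mem_centralizer_singleton_iff] at hy
    first | exact hy | exact hy.symm
  set T : Subgroup (Raag (Γ.induce (bS Γ u true))) :=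
    { carrier := {x | ∃ (h : Raag (Γ.induce (linkSet Γ u))) (k : ℤ), x = φS Γ u true h * c ^ k}
      one_mem' := ⟨1, 0, by simp⟩
      mul_mem' := by
        rintro a b ⟨h₁, k₁, rfl⟩ ⟨h₂, k₂, rfl⟩
        refine ⟨h₁ * h₂, k₁ + k₂, ?_⟩
        have hcom : Commute (c ^ k₁) (φS Γ u true h₂) := Commute.zpow_left (hcen _) k₁
        rw [map_mul, zpow_add]
        calc (φS Γ u true h₁ * c ^ k₁) * (φS Γ u true h₂ * c ^ k₂)
            = φS Γ u true h₁ * ((c ^ k₁ * φS Γ u true h₂) * c ^ k₂) := by group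
          _ = φS Γ u true h₁ * ((φS Γ u true h₂ * c ^ k₁) * c ^ k₂) := by rw [hcom.eq]
          _ = φS Γ u true h₁ * φS Γ u true h₂ * (c ^ k₁ * c ^ k₂) := by group
      inv_mem' := by
        rintro a ⟨h₁, k₁, rfl⟩
        refine ⟨h₁⁻¹, -k₁, ?_⟩
        have hcom : Commute (c ^ (-k₁)) ((φS Γ u true h₁)⁻¹) := Commute.zpow_left (hcen _) (-k₁)
        rw [map_inv]
        calc (φS Γ u true h₁ * c ^ k₁)⁻¹
            = c ^ (-k₁) * (φS Γ u true h₁)⁻¹ := by group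
          _ = (φS Γ u true h₁)⁻¹ * c ^ (-k₁) := hcom.eq }
  have hT : T = ⊤ := by
    rw [eq_top_iff, ← closure_range_of, closure_le]
    rintro _ ⟨s, rfl⟩
    by_cases h : s.1 = u
    · have hs : s = ⟨u, u_mem_star Γ u⟩ := Subtype.ext h
      exact ⟨1, (1 : ℤ), by simp [hs, hc]⟩
    · have hsl : s.1 ∈ linkSet Γ u := s.2.resolve_left h
      refine ⟨Raag.of _ ⟨s.1, hsl⟩, (0 : ℤ), ?_⟩
      have : φS Γ u true (Raag.of _ (⟨s.1, hsl⟩ : linkSet Γ u)) = Raag.of _ s := by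
        rw [φS, mapSub_of]
      simp [this]
  have hx : x ∈ T := hT ▸ Subgroup.mem_top x
  obtain ⟨h, k, hxe⟩ := hx
  exact ⟨h, k, hxe⟩

end Split
end RaagAux

namespace RaagAux
section Amalgam3
open Monoid Monoid.PushoutI Subgroup

variable {ι : Type*} {H : Type*} {G : ι → Type*} [Group H] [∀ i, Group (G i)]
  {φ : ∀ i, H →* G i}

theorem of_mul_base (i : ι) (x : G i) (h : H) :
    PushoutI.of (φ := φ) i x * base φ h = PushoutI.of (φ := φ) i (x * φ i h) := by
  rw [map_mul, of_apply_eq_base]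

theorem OkW.left {l₁ l₂ : List (Σ i, G i)} (h : OkW φ (l₁ ++ l₂)) : OkW φ l₁ :=
  ⟨(List.isChain_append.1 h.1).1, fun p hp => h.2 p (List.mem_append.2 (Or.inl hp))⟩

theorem okW_concat_snd {l₀ : List (Σ i, G i)} {j : ι} {x x' : G j}
    (h : OkW φ (l₀ ++ [⟨j, x⟩])) (hx' : x' ∉ (φ j).range) :
    OkW φ (l₀ ++ [⟨j, x'⟩]) := by
  obtain ⟨hchain, hmem⟩ := h
  rw [List.isChain_append] at hchain
  constructor
  · rw [List.isChain_append]
    refine ⟨hchain.1, List.isChain_singleton _, ?_⟩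
    intro p hp q hq
    have hq' : q = ⟨j, x'⟩ := (by simpa using hq : (⟨j, x'⟩ : (i : ι) × G i) = q).symm
    subst hq'
    have := hchain.2.2 p hp ⟨j, x⟩ (by simp)
    simpa using this
  · intro p hp
    rcases List.mem_append.1 hp with h' | h'
    · exact hmem p (List.mem_append.2 (Or.inl h'))
    · rcases List.mem_singleton.1 h' with rfl
      exact hx'

theorem not_mul_base_mem_range {j : ι} {x : G j} (hx : x ∉ (φ j).range) (h : H) :
    x * φ j h ∉ (φ j).range := by
  rintro ⟨y, hy⟩
  exact hx ⟨y * h⁻¹, by rw [map_mul, map_inv, hy]; group⟩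

theorem mem_range_of_all_eq {l : List (Σ i, G i)} {j : ι}
    (hall : ∀ p ∈ l, p.1 = j) (hchain : l.Chain' (fun a b => a.1 ≠ b.1)) (h : H) :
    wP φ l * base φ h ∈ Set.range (PushoutI.of (φ := φ) j) := by
  rcases l with _ | ⟨⟨b, x⟩, _ | ⟨q, l'⟩⟩
  · exact ⟨φ j h, by simp [of_apply_eq_base]⟩
  · have hb : b = j := hall ⟨b, x⟩ (by simp)
    subst hb
    exact ⟨x * φ b h, by rw [wP_cons, wP_nil, mul_one, of_mul_base]⟩
  · exfalso
    have h1 := hall ⟨b, x⟩ (by simp)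
    have h2 := hall q (by simp)
    have := (List.isChain_cons_cons.1 hchain).1
    exact this (h1.trans h2.symm)

end Amalgam3
end RaagAux

namespace RaagAux
open Monoid Monoid.PushoutI Subgroup

universe u

/-- The centralizer of a generator is contained in the star parabolic. -/
theorem centralizer_le_star_aux : ∀ (n : ℕ) (V : Type u) [Fintype V] [DecidableEq V]
    (Γ : SimpleGraph V), Fintype.card V ≤ n → ∀ (u : V) (g : Raag Γ),
    g * Raag.of Γ u = Raag.of Γ u * g →
    g ∈ closure (Raag.of Γ '' starSet Γ u) := by
  intro n
  induction n with
  | zero =>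
    intro V _ _ Γ hcard u g _
    exact absurd (Fintype.card_pos_iff.2 ⟨u⟩) (by omega)
  | succ n ih =>
    intro V _ _ Γ hcard u g hg
    by_cases hstar : starSet Γ u = Set.univ
    · rw [hstar, Set.image_univ, closure_range_of]
      trivial
    obtain ⟨w₀, hw₀⟩ := (Set.ne_univ_iff_exists_notMem _).1 hstar
    have huw : u ≠ w₀ := fun h => hw₀ (h ▸ Or.inl rfl)
    have hnadj : ¬ Γ.Adj u w₀ := fun h => hw₀ (Or.inr h)
    set c₀ : Raag (Γ.induce (bS Γ w₀ false)) := Raag.of _ ⟨u, huw⟩ with hc₀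
    have hFu : Fsp Γ w₀ (Raag.of Γ u) = PushoutI.of (φ := φS Γ w₀) false c₀ :=
      Fsp_of_ne Γ w₀ huw
    have hclass : ∀ (t : Raag (Γ.induce (bS Γ w₀ false))),
        t * c₀ * t⁻¹ ∉ (φS Γ w₀ false).range := by
      intro t ht
      rw [show φS Γ w₀ false = mapSub Γ (link_subset_bS Γ w₀ false) from rfl,
        range_mapSub] at ht
      have hmem := mem_of_conj_mem _ ht
      exact hnadj (Γ.adj_symm hmem)
    have hFconj : Fsp Γ w₀ g * PushoutI.of (φ := φS Γ w₀) false c₀ * (Fsp Γ w₀ g)⁻¹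
        = PushoutI.of (φ := φS Γ w₀) false c₀ := by
      rw [← hFu, ← map_inv, ← map_mul, ← map_mul]
      rw [show g * Raag.of Γ u * g⁻¹ = Raag.of Γ u by rw [hg]; group]
    obtain ⟨l, hb, hOk, hrep⟩ := exists_rep (φS_injective Γ w₀) (Fsp Γ w₀ g)
    have key : ∀ (m : ℕ) (l : List (Σ b, Raag (Γ.induce (bS Γ w₀ b)))), l.length ≤ m →
        ∀ (hb : Raag (Γ.induce (linkSet Γ w₀))) (c : Raag (Γ.induce (bS Γ w₀ false))),
        OkW (φS Γ w₀) l → (∃ t, c = t * c₀ * t⁻¹) →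
        (wP (φS Γ w₀) l * base (φS Γ w₀) hb) * PushoutI.of (φ := φS Γ w₀) false c
            * (wP (φS Γ w₀) l * base (φS Γ w₀) hb)⁻¹
          = PushoutI.of (φ := φS Γ w₀) false c₀ →
        ∀ p ∈ l, p.1 = false := by
      intro m
      induction m with
      | zero =>
        intro l hlen _ _ _ _ _ p hp
        have hnil : l = [] := List.eq_nil_of_length_eq_zero (by omega)
        subst hnil
        simp at hp
      | succ m ihm =>
        intro l hlen hb c hOk hcl heq
        rcases List.eq_nil_or_concat l with rfl | ⟨l₀, p, rfl⟩
        · intro p hp; simp at hp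
        simp only [List.concat_eq_append] at hOk hlen heq ⊢
        obtain ⟨bb, x⟩ := p
        set x' := x * φS Γ w₀ bb hb with hx'
        have habs : wP (φS Γ w₀) (l₀ ++ [⟨bb, x⟩]) * base (φS Γ w₀) hb
            = wP (φS Γ w₀) (l₀ ++ [⟨bb, x'⟩]) := by
          rw [wP_append, wP_append, wP_cons, wP_nil, wP_cons, wP_nil, mul_one, mul_one,
            mul_assoc, of_mul_base]
        have hx'r : x' ∉ (φS Γ w₀ bb).range :=
          not_mul_base_mem_range (hOk.2 ⟨bb, x⟩ (by simp)) hb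
        have hOk' : OkW (φS Γ w₀) (l₀ ++ [⟨bb, x'⟩]) := okW_concat_snd hOk hx'r
        rw [habs] at heq
        cases bb
        case false =>
          have heq2 : (wP (φS Γ w₀) l₀ * base (φS Γ w₀) 1)
              * PushoutI.of (φ := φS Γ w₀) false (x' * c * x'⁻¹)
              * (wP (φS Γ w₀) l₀ * base (φS Γ w₀) 1)⁻¹
              = PushoutI.of (φ := φS Γ w₀) false c₀ := by
            rw [map_one, mul_one, ← heq, wP_append, wP_cons, wP_nil, mul_one,
              map_mul, map_mul, map_inv]
            group
          obtain ⟨t, rfl⟩ := hcl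
          have hall₀ := ihm l₀ (by simp at hlen; omega) 1 (x' * (t * c₀ * t⁻¹) * x'⁻¹)
            hOk'.left ⟨x' * t, by group⟩ heq2
          intro p hp
          rcases List.mem_append.1 hp with h' | h'
          · exact hall₀ p h'
          · rw [List.mem_singleton.1 h']
        case true =>
          exfalso
          obtain ⟨t, rfl⟩ := hcl
          have hlast : ∀ q ∈ (l₀ ++ [(⟨true, x'⟩ : Σ b, Raag (Γ.induce (bS Γ w₀ b)))]).getLast?,
              Sigma.fst q ≠ false := by
            intro q hq
            rw [List.getLast?_concat] at hq
            have hq2 : (⟨true, x'⟩ : Σ b, Raag (Γ.induce (bS Γ w₀ b))) = q := by simpa using hq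
            rw [← hq2]
            simp
          exact conj_notin_range (φS_injective Γ w₀) hOk' (by simp) (hclass t) hlast false
            (by rw [heq]; exact ⟨c₀, rfl⟩)
    have hall : ∀ p ∈ l, p.1 = false :=
      key l.length l le_rfl hb c₀ hOk ⟨1, by group⟩ (by rw [← hrep]; exact hFconj)
    have hmemr : Fsp Γ w₀ g ∈ Set.range (PushoutI.of (φ := φS Γ w₀) false) := by
      rw [hrep]
      exact mem_range_of_all_eq hall hOk.1 hb
    obtain ⟨g₁, hg₁⟩ := mem_range_incl_of_Fsp Γ w₀ hmemr
    have hcomm₁ : g₁ * Raag.of _ (⟨u, huw⟩ : bS Γ w₀ false)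
        = Raag.of _ (⟨u, huw⟩ : bS Γ w₀ false) * g₁ := by
      apply incl_injective Γ (bS Γ w₀ false)
      rw [map_mul, map_mul, incl_of, hg₁]
      exact hg
    haveI : DecidablePred (· ∈ bS Γ w₀ false) := Classical.decPred _
    have hcard₁ : Fintype.card (bS Γ w₀ false) ≤ n := by
      have h1 : Fintype.card (bS Γ w₀ false) < Fintype.card V := by
        apply Fintype.card_subtype_lt (x := w₀)
        simp [bS]
      omega
    have hmem₁ := ih ↥(bS Γ w₀ false) (Γ.induce (bS Γ w₀ false)) hcard₁ ⟨u, huw⟩ g₁ hcomm₁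
    rw [← hg₁]
    have hmap : incl Γ (bS Γ w₀ false) g₁ ∈
        Subgroup.map (incl Γ (bS Γ w₀ false))
          (closure (Raag.of (Γ.induce (bS Γ w₀ false)) ''
            starSet (Γ.induce (bS Γ w₀ false)) ⟨u, huw⟩)) :=
      Subgroup.mem_map_of_mem _ hmem₁
    rw [MonoidHom.map_closure] at hmap
    refine closure_mono ?_ hmap
    rintro _ ⟨_, ⟨s, hs, rfl⟩, rfl⟩
    rw [incl_of]
    refine ⟨s.1, ?_, rfl⟩
    rcases hs with hs | hs
    · exact Or.inl (congrArg Subtype.val hs)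
    · exact Or.inr (by simpa using hs)

end RaagAux

namespace RaagAux
open Monoid Monoid.PushoutI Subgroup

/-- If a conjugate of a generator lies in a parabolic, the conjugator factors as a
parabolic element times a centralizing element. -/
theorem conj_parabolic_aux : ∀ (n : ℕ) (V : Type u) [Fintype V] [DecidableEq V]
    (Γ : SimpleGraph V), Fintype.card V ≤ n → ∀ (S : Set V) (v : V) (g : Raag Γ),
    g * Raag.of Γ v * g⁻¹ ∈ closure (Raag.of Γ '' S) →
    ∃ a ∈ closure (Raag.of Γ '' S), ∃ z : Raag Γ,
      z * Raag.of Γ v = Raag.of Γ v * z ∧ g = a * z := by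
  intro n
  induction n with
  | zero =>
    intro V _ _ Γ hcard S v g _
    exact absurd (Fintype.card_pos_iff.2 ⟨v⟩) (by omega)
  | succ n ih =>
    intro V _ _ Γ hcard S v g hyp
    by_cases hS : S = Set.univ
    · refine ⟨g, ?_, 1, by group, by group⟩
      rw [hS, Set.image_univ, closure_range_of]
      trivial
    obtain ⟨u, hu⟩ := (Set.ne_univ_iff_exists_notMem _).1 hS
    have hv : v ∈ S := mem_of_conj_mem Γ hyp
    have hvu : v ≠ u := fun h => hu (h ▸ hv)
    set v₁ : Raag (Γ.induce (bS Γ u false)) := Raag.of _ ⟨v, hvu⟩ with hv₁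
    have hFv : Fsp Γ u (Raag.of Γ v) = PushoutI.of (φ := φS Γ u) false v₁ :=
      Fsp_of_ne Γ u hvu
    haveI : DecidablePred (· ∈ bS Γ u false) := Classical.decPred _
    have hcard₁ : Fintype.card (bS Γ u false) ≤ n := by
      have h1 : Fintype.card (bS Γ u false) < Fintype.card V := by
        apply Fintype.card_subtype_lt (x := u)
        simp [bS]
      omega
    -- membership of the parabolic in the image of the first factor
    have hDrange : ∀ h ∈ closure (Raag.of Γ '' S),
        Fsp Γ u h ∈ Set.range (PushoutI.of (φ := φS Γ u) false) := by
      intro h hh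
      have hle : closure (Raag.of Γ '' S) ≤
          Subgroup.comap (Fsp Γ u) (PushoutI.of (φ := φS Γ u) false).range := by
        rw [closure_le]
        rintro _ ⟨s, hs, rfl⟩
        have hsu : s ≠ u := fun h => hu (h ▸ hs)
        rw [SetLike.mem_coe, Subgroup.mem_comap, Fsp_of_ne Γ u hsu]
        exact ⟨_, rfl⟩
      obtain ⟨x, hx⟩ := hle hh
      exact ⟨x, hx⟩
    -- descending to the complement-of-u subgroup
    have descend : ∀ g : Raag Γ, g ∈ (incl Γ (bS Γ u false)).range →
        g * Raag.of Γ v * g⁻¹ ∈ closure (Raag.of Γ '' S) →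
        ∃ a ∈ closure (Raag.of Γ '' S), ∃ z : Raag Γ,
          z * Raag.of Γ v = Raag.of Γ v * z ∧ g = a * z := by
      rintro _ ⟨g₁, rfl⟩ hyp'
      set S₁ : Set ↥(bS Γ u false) := {t | t.1 ∈ S} with hS₁
      have hret : g₁ * Raag.of _ (⟨v, hvu⟩ : bS Γ u false) * g₁⁻¹
          ∈ closure (Raag.of (Γ.induce (bS Γ u false)) '' S₁) := by
        have hle : closure (Raag.of Γ '' S) ≤
            Subgroup.comap (retr Γ (bS Γ u false))
              (closure (Raag.of (Γ.induce (bS Γ u false)) '' S₁)) := by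
          rw [closure_le]
          rintro _ ⟨s, hs, rfl⟩
          have hsu : s ≠ u := fun h => hu (h ▸ hs)
          rw [SetLike.mem_coe, Subgroup.mem_comap,
            retr_of_mem Γ (bS Γ u false) s (show s ∈ bS Γ u false from hsu)]
          exact subset_closure ⟨⟨s, hsu⟩, hs, rfl⟩
        have := hle hyp'
        rw [Subgroup.mem_comap] at this
        simpa [map_mul, map_inv, retr_incl,
          retr_of_mem Γ (bS Γ u false) v (show v ∈ bS Γ u false from hvu)] using this
      obtain ⟨a₁, ha₁, z₁, hz₁, hfac⟩ :=
        ih ↥(bS Γ u false) (Γ.induce (bS Γ u false)) hcard₁ S₁ ⟨v, hvu⟩ g₁ hret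
      refine ⟨incl Γ _ a₁, ?_, incl Γ _ z₁, ?_, ?_⟩
      · have hmap : incl Γ (bS Γ u false) a₁ ∈
            Subgroup.map (incl Γ (bS Γ u false))
              (closure (Raag.of (Γ.induce (bS Γ u false)) '' S₁)) :=
          Subgroup.mem_map_of_mem _ ha₁
        rw [MonoidHom.map_closure] at hmap
        refine closure_mono ?_ hmap
        rintro _ ⟨_, ⟨s, hs, rfl⟩, rfl⟩
        rw [incl_of]
        exact ⟨s.1, hs, rfl⟩
      · have := congrArg (incl Γ (bS Γ u false)) hz₁
        simpa [map_mul] using this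
      · rw [hfac, map_mul]
    -- the inner induction on word length
    have key : ∀ (m : ℕ) (l : List (Σ b, Raag (Γ.induce (bS Γ u b))))
        (hb : Raag (Γ.induce (linkSet Γ u))) (g : Raag Γ),
        l.length ≤ m → OkW (φS Γ u) l →
        Fsp Γ u g = wP (φS Γ u) l * base (φS Γ u) hb →
        g * Raag.of Γ v * g⁻¹ ∈ closure (Raag.of Γ '' S) →
        ∃ a ∈ closure (Raag.of Γ '' S), ∃ z : Raag Γ,
          z * Raag.of Γ v = Raag.of Γ v * z ∧ g = a * z := by
      intro m
      induction m with
      | zero =>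
        intro l hb g hlen _ hrep hyp'
        have hnil : l = [] := List.eq_nil_of_length_eq_zero (by omega)
        subst hnil
        refine descend g (mem_range_incl_of_Fsp Γ u ?_) hyp'
        rw [hrep, wP_nil, one_mul]
        exact ⟨φS Γ u false hb, (of_apply_eq_base _ _ _)⟩
      | succ m ihm =>
        intro l hb g hlen hOk hrep hyp'
        rcases List.eq_nil_or_concat l with rfl | ⟨l₀, p, rfl⟩
        · refine descend g (mem_range_incl_of_Fsp Γ u ?_) hyp'
          rw [hrep, wP_nil, one_mul]
          exact ⟨φS Γ u false hb, (of_apply_eq_base _ _ _)⟩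
        simp only [List.concat_eq_append] at hOk hlen hrep ⊢
        obtain ⟨bb, x⟩ := p
        set x' := x * φS Γ u bb hb with hx'
        have habs : wP (φS Γ u) (l₀ ++ [⟨bb, x⟩]) * base (φS Γ u) hb
            = wP (φS Γ u) (l₀ ++ [⟨bb, x'⟩]) := by
          rw [wP_append, wP_append, wP_cons, wP_nil, wP_cons, wP_nil, mul_one, mul_one,
            mul_assoc, of_mul_base]
        have hx'r : x' ∉ (φS Γ u bb).range :=
          not_mul_base_mem_range (hOk.2 ⟨bb, x⟩ (by simp)) hb
        have hOk' : OkW (φS Γ u) (l₀ ++ [⟨bb, x'⟩]) := okW_concat_snd hOk hx'r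
        rw [habs] at hrep
        have hlen₀ : l₀.length ≤ m := by simp at hlen; omega
        have hlast : ∀ q ∈ l₀.getLast?, Sigma.fst q ≠ bb := by
          intro q hq
          have := (List.isChain_append.1 hOk'.1).2.2 q hq ⟨bb, x'⟩ (by simp)
          simpa using this
        -- the image of the conjugation hypothesis
        have hFconj : Fsp Γ u (g * Raag.of Γ v * g⁻¹)
            ∈ Set.range (PushoutI.of (φ := φS Γ u) false) := hDrange _ hyp'
        cases bb
        case false =>
          set c : Raag (Γ.induce (bS Γ u false)) := x' * v₁ * x'⁻¹ with hc
          have hconj_eq : Fsp Γ u (g * Raag.of Γ v * g⁻¹)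
              = wP (φS Γ u) l₀ * PushoutI.of (φ := φS Γ u) false c * (wP (φS Γ u) l₀)⁻¹ := by
            rw [map_mul, map_mul, map_inv, hFv, hrep, hc, hx']
            simp only [wP_append, wP_cons, wP_nil, map_mul, map_inv, mul_one]
            group
          by_cases hcr : c ∈ (φS Γ u false).range
          · -- x' conjugates v into the link subgroup of the smaller RAAG
            have hcrc : c ∈ closure (Raag.of (Γ.induce (bS Γ u false)) ''
                {t : ↥(bS Γ u false) | t.1 ∈ linkSet Γ u}) := by
              rwa [show φS Γ u false = mapSub Γ (link_subset_bS Γ u false) from rfl,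
                range_mapSub] at hcr
            obtain ⟨a₁, ha₁, z₁, hz₁, hfac⟩ :=
              ih ↥(bS Γ u false) (Γ.induce (bS Γ u false)) hcard₁ _ ⟨v, hvu⟩ x' hcrc
            have ha₁r : a₁ ∈ (φS Γ u false).range := by
              rwa [show φS Γ u false = mapSub Γ (link_subset_bS Γ u false) from rfl,
                range_mapSub]
            obtain ⟨h₃, rfl⟩ := ha₁r
            set zc := incl Γ (bS Γ u false) z₁ with hzc
            have hzcv : zc * Raag.of Γ v = Raag.of Γ v * zc := by
              have := congrArg (incl Γ (bS Γ u false)) hz₁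
              simpa [map_mul] using this
            set g' := g * zc⁻¹ with hg'
            have hrep' : Fsp Γ u g' = wP (φS Γ u) l₀ * base (φS Γ u) h₃ := by
              rw [hg', map_mul, map_inv, hzc, Fsp_incl_false, hrep, wP_append, wP_cons,
                wP_nil, mul_one, hfac, map_mul, of_apply_eq_base]
              group
            have hyp'' : g' * Raag.of Γ v * g'⁻¹ ∈ closure (Raag.of Γ '' S) := by
              have hzz : zc⁻¹ * Raag.of Γ v * zc = Raag.of Γ v := by
                calc zc⁻¹ * Raag.of Γ v * zc = zc⁻¹ * (Raag.of Γ v * zc) := by group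
                  _ = zc⁻¹ * (zc * Raag.of Γ v) := by rw [← hzcv]
                  _ = Raag.of Γ v := by group
              rw [hg']
              have : g * zc⁻¹ * Raag.of Γ v * (g * zc⁻¹)⁻¹
                  = g * (zc⁻¹ * Raag.of Γ v * zc) * g⁻¹ := by group
              rw [this, hzz]
              exact hyp'
            obtain ⟨a, ha, z, hz, hfac'⟩ := ihm l₀ h₃ g' hlen₀ hOk'.left hrep' hyp''
            refine ⟨a, ha, z * zc, ?_, ?_⟩
            · rw [mul_assoc, hzcv, ← mul_assoc, hz, mul_assoc]
            · rw [← mul_assoc, ← hfac', hg']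
              group
          · -- contradiction or descend
            rcases List.eq_nil_or_concat l₀ with rfl | ⟨l₀', q, rfl⟩
            · refine descend g (mem_range_incl_of_Fsp Γ u ?_) hyp'
              rw [hrep, wP_append, wP_nil, wP_cons, wP_nil, one_mul, mul_one]
              exact ⟨x', rfl⟩
            · exfalso
              rw [hconj_eq] at hFconj
              exact conj_notin_range (φS_injective Γ u) hOk'.left (by simp) hcr hlast
                false hFconj
        case true =>
          by_cases hadj : v ∈ linkSet Γ u
          · -- decompose x' in the star subgroup
            obtain ⟨h₄, k, hdec⟩ := star_decomp Γ u x'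
            have hcomuv : Raag.of Γ u ^ k * Raag.of Γ v = Raag.of Γ v * Raag.of Γ u ^ k :=
              ((adj_commute Γ hadj).zpow_left k).eq
            set g' := g * (Raag.of Γ u ^ k)⁻¹ with hg'
            have hrep' : Fsp Γ u g' = wP (φS Γ u) l₀ * base (φS Γ u) h₄ := by
              rw [hg', map_mul, map_inv, map_zpow, Fsp_of_u, hrep, wP_append, wP_cons,
                wP_nil, mul_one, hdec, map_mul, of_apply_eq_base, map_zpow]
              group
            have hyp'' : g' * Raag.of Γ v * g'⁻¹ ∈ closure (Raag.of Γ '' S) := by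
              have hzz : (Raag.of Γ u ^ k)⁻¹ * Raag.of Γ v * Raag.of Γ u ^ k
                  = Raag.of Γ v := by
                calc (Raag.of Γ u ^ k)⁻¹ * Raag.of Γ v * Raag.of Γ u ^ k
                    = (Raag.of Γ u ^ k)⁻¹ * (Raag.of Γ v * Raag.of Γ u ^ k) := by group
                  _ = (Raag.of Γ u ^ k)⁻¹ * (Raag.of Γ u ^ k * Raag.of Γ v) := by rw [← hcomuv]
                  _ = Raag.of Γ v := by group
              rw [hg']
              have : g * (Raag.of Γ u ^ k)⁻¹ * Raag.of Γ v * (g * (Raag.of Γ u ^ k)⁻¹)⁻¹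
                  = g * ((Raag.of Γ u ^ k)⁻¹ * Raag.of Γ v * Raag.of Γ u ^ k) * g⁻¹ := by
                group
              rw [this, hzz]
              exact hyp'
            obtain ⟨a, ha, z, hz, hfac'⟩ := ihm l₀ h₄ g' hlen₀ hOk'.left hrep' hyp''
            refine ⟨a, ha, z * Raag.of Γ u ^ k, ?_, ?_⟩
            · rw [mul_assoc, hcomuv, ← mul_assoc, hz, mul_assoc]
            · rw [← mul_assoc, ← hfac', hg']
              group
          · -- v not adjacent to u: contradiction
            exfalso
            have hv₁r : v₁ ∉ (φS Γ u false).range := by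
              intro hr
              rw [show φS Γ u false = mapSub Γ (link_subset_bS Γ u false) from rfl,
                range_mapSub] at hr
              have h2 : (1 : Raag (Γ.induce (bS Γ u false)))
                  * Raag.of (Γ.induce (bS Γ u false)) ⟨v, hvu⟩ * (1 : Raag (Γ.induce (bS Γ u false)))⁻¹
                  ∈ closure (Raag.of (Γ.induce (bS Γ u false)) ''
                    {t : ↥(bS Γ u false) | t.1 ∈ linkSet Γ u}) := by simpa [hv₁] using hr
              exact hadj (mem_of_conj_mem (Γ.induce (bS Γ u false)) h2)
            have hconj_eq : Fsp Γ u (g * Raag.of Γ v * g⁻¹)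
                = wP (φS Γ u) (l₀ ++ [⟨true, x'⟩])
                  * PushoutI.of (φ := φS Γ u) false v₁
                  * (wP (φS Γ u) (l₀ ++ [⟨true, x'⟩]))⁻¹ := by
              rw [map_mul, map_mul, map_inv, hFv, hrep]
            have hlast' : ∀ q ∈ (l₀ ++
                [(⟨true, x'⟩ : Σ b, Raag (Γ.induce (bS Γ u b)))]).getLast?,
                Sigma.fst q ≠ false := by
              intro q hq
              rw [List.getLast?_concat] at hq
              have hq2 : (⟨true, x'⟩ : Σ b, Raag (Γ.induce (bS Γ u b))) = q := by
                simpa using hq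
              rw [← hq2]
              simp
            rw [hconj_eq] at hFconj
            exact conj_notin_range (φS_injective Γ u) hOk' (by simp) hv₁r hlast'
              false hFconj
    obtain ⟨l, hb, hOk, hrep⟩ := exists_rep (φS_injective Γ u) (Fsp Γ u g)
    exact key l.length l hb g le_rfl hOk hrep hyp

end RaagAux

open RaagAux Subgroup in
/-- for distinct vertices `u, v`, the conjugates `u^x` and `v^y` commute iff
`[u,v] = 1` and `x y⁻¹ ∈ Z(u) Z(v)`. -/
theorem conjugates_commute_iff {V : Type*} [Fintype V] (Γ : SimpleGraph V)
    (u v : V) (huv : u ≠ v) (x y : Raag Γ) :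
    Commute (x⁻¹ * Raag.of Γ u * x) (y⁻¹ * Raag.of Γ v * y) ↔
      Commute (Raag.of Γ u) (Raag.of Γ v) ∧
      ∃ g ∈ Subgroup.centralizer {Raag.of Γ u},
        ∃ h ∈ Subgroup.centralizer {Raag.of Γ v}, x * y⁻¹ = g * h := by
  classical
  have conj_iff : ∀ a b c : Raag Γ, Commute a b → Commute (c * a * c⁻¹) (c * b * c⁻¹) := by
    intro a b c h
    simpa using h.map (MulAut.conj c).toMonoidHom
  constructor
  · intro h
    set z := x * y⁻¹ with hz
    have h1 : Commute (z⁻¹ * Raag.of Γ u * z) (Raag.of Γ v) := by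
      have hcj := conj_iff _ _ y h
      have e1 : y * (x⁻¹ * Raag.of Γ u * x) * y⁻¹ = z⁻¹ * Raag.of Γ u * z := by
        rw [hz]; group
      have e2 : y * (y⁻¹ * Raag.of Γ v * y) * y⁻¹ = Raag.of Γ v := by group
      rwa [e1, e2] at hcj
    have h2 : Commute (Raag.of Γ u) (z * Raag.of Γ v * z⁻¹) := by
      have hcj := conj_iff _ _ z h1
      have e : z * (z⁻¹ * Raag.of Γ u * z) * z⁻¹ = Raag.of Γ u := by group
      rwa [e] at hcj
    have h3 : z * Raag.of Γ v * z⁻¹ ∈ closure (Raag.of Γ '' starSet Γ u) := by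
      apply centralizer_le_star_aux (Fintype.card V) V Γ le_rfl u
      exact h2.symm.eq
    have hvstar : v ∈ starSet Γ u := mem_of_conj_mem Γ h3
    have hadj : Γ.Adj u v := hvstar.resolve_left (fun h' => huv h'.symm)
    refine ⟨adj_commute Γ hadj, ?_⟩
    obtain ⟨a, ha, zz, hzz, hfac⟩ :=
      conj_parabolic_aux (Fintype.card V) V Γ le_rfl (starSet Γ u) v z h3
    refine ⟨a, ?_, zz, ?_, ?_⟩
    · have hle : closure (Raag.of Γ '' starSet Γ u) ≤ Subgroup.centralizer {Raag.of Γ u} := by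
        rw [closure_le]
        rintro _ ⟨s, hs, rfl⟩
        rw [SetLike.mem_coe, Subgroup.mem_centralizer_singleton_iff]
        rcases hs with rfl | hs
        · rfl
        · exact (adj_commute Γ hs).symm.eq
      exact hle ha
    · rw [Subgroup.mem_centralizer_singleton_iff]
      exact hzz
    · exact hfac
  · rintro ⟨hcomm, g, hg, hh, hhc, hfac⟩
    rw [Subgroup.mem_centralizer_singleton_iff] at hg hhc
    have h1 : Commute ((x * y⁻¹)⁻¹ * Raag.of Γ u * (x * y⁻¹)) (Raag.of Γ v) := by
      rw [hfac]
      have hgu : g⁻¹ * Raag.of Γ u * g = Raag.of Γ u := by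
        calc g⁻¹ * Raag.of Γ u * g = g⁻¹ * (Raag.of Γ u * g) := by group
          _ = g⁻¹ * (g * Raag.of Γ u) := by rw [← hg]
          _ = Raag.of Γ u := by group
      have e : (g * hh)⁻¹ * Raag.of Γ u * (g * hh) = hh⁻¹ * Raag.of Γ u * hh := by
        calc (g * hh)⁻¹ * Raag.of Γ u * (g * hh)
            = hh⁻¹ * (g⁻¹ * Raag.of Γ u * g) * hh := by group
          _ = hh⁻¹ * Raag.of Γ u * hh := by rw [hgu]
      rw [e]
      have hcj := conj_iff _ _ hh⁻¹ hcomm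
      have e2 : hh⁻¹ * Raag.of Γ v * hh⁻¹⁻¹ = Raag.of Γ v := by
        calc hh⁻¹ * Raag.of Γ v * hh⁻¹⁻¹ = hh⁻¹ * (Raag.of Γ v * hh) := by group
          _ = hh⁻¹ * (hh * Raag.of Γ v) := by rw [← hhc]
          _ = Raag.of Γ v := by group
      have e3 : hh⁻¹ * Raag.of Γ u * hh⁻¹⁻¹ = hh⁻¹ * Raag.of Γ u * hh := by group
      rwa [e2, e3] at hcj
    have hcj := conj_iff _ _ y⁻¹ h1
    have e3 : y⁻¹ * ((x * y⁻¹)⁻¹ * Raag.of Γ u * (x * y⁻¹)) * y⁻¹⁻¹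
        = x⁻¹ * Raag.of Γ u * x := by group
    have e4 : y⁻¹ * Raag.of Γ v * y⁻¹⁻¹ = y⁻¹ * Raag.of Γ v * y := by group
    rwa [e3, e4] at hcj
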